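/- arXiv:2504.14647 — 2 statements merged into one kernel-verified Lean document; each statement's English description precedes it below -/
import Mathlib

section
/- The skew-symmetric bilinear map φ_1 on the 5-dimensional Heisenberg Lie algebra h_2, defined on basis vectors by φ_1(e_1,e_3) = 2e_2 − 2e_3, φ_1(e_1,e_4) = e_3, φ_1(e_2,e_4) = e_2, φ_1(e_3,e_4) = 2e_3 − e_2, and zero on all other pairs of basis vectors, is a 2-cocycle with adjoint coefficients. -/
noncomputable section

/-- The underlying space of the 5-dimensional Heisenberg Lie algebra `h₂`. -/
abbrev V : Type := Fin 5 → ℝ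

/-- Basis vectors: `e 0, …, e 4` are `e₁, …, e₅`. -/
def e (i : Fin 5) : V := Pi.single i 1

/-- The Heisenberg bracket on `h₂`: `[e₁,e₃] = e₅`, `[e₂,e₄] = e₅`. -/
def br (x y : V) : V :=
  (x 0 * y 2 - x 2 * y 0 + x 1 * y 3 - x 3 * y 1) • e 4

/-- The deformed bracket `[x,y]_t = [x,y] + t • φ x y`. -/
def brt (t : ℝ) (φ : V → V → V) (x y : V) : V := br x y + t • φ x y

/-- The Chevalley–Eilenberg 2-cocycle condition (adjoint coefficients) for a
skew-symmetric 2-cochain `φ` on `h₂`. -/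
def IsCocycle (φ : V → V → V) : Prop :=
  ∀ x y z : V,
    φ (br x y) z - φ (br x z) y + φ (br y z) x
      - br x (φ y z) + br y (φ x z) - br z (φ x y) = 0

/-- The 2-cochain `φ₁`: `φ₁(e₁,e₃) = 2e₂ − 2e₃`, `φ₁(e₁,e₄) = e₃`, `φ₁(e₂,e₄) = e₂`, `φ₁(e₃,e₄) = 2e₃ − e₂`, zero on other basis pairs. -/
def phi1 (x y : V) : V :=
  (x 0 * y 2 - x 2 * y 0) • ((2:ℝ) • e 1 - (2:ℝ) • e 2)
  + (x 0 * y 3 - x 3 * y 0) • e 2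
  + (x 1 * y 3 - x 3 * y 1) • e 1
  + (x 2 * y 3 - x 3 * y 2) • ((2:ℝ) • e 2 - e 1)

/-- `φ₁` is a 2-cocycle of `h₂` with adjoint coefficients. -/
theorem phi1_isCocycle : IsCocycle phi1 := by
  intro x y z
  funext i
  fin_cases i <;>
    simp [phi1, br, e, IsCocycle, Pi.single, Function.update, Pi.add_apply, Pi.smul_apply] <;> ring

end
end

section
/- For q ≠ 0, the infinitesimal deformation of h_2 given by the cocycle φ_8(0,q,0) (i.e., φ(e_2,e_3) = e_1 + q e_2, φ(e_1,e_4) = −q e_5, φ(e_2,e_4) = −q^2·e_2 taken from the formula with p = 0, r = 0) is not extendable to a second-order deformation with the same cochain: the bracket [x,y]_t = [x,y] + t φ(x,y) fails the Jacobi identity, with a nonzero t^2-term appearing. -/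
noncomputable section

/-- The cochain `φ₈(0,q,0)` of Statement 17: `(e₂,e₃) ↦ e₁ + q e₂`, `(e₁,e₄) ↦ −q e₅`, `(e₂,e₄) ↦ −q² e₂`, zero otherwise. -/
def phi17 (q : ℝ) (x y : V) : V :=
  (x 1 * y 2 - x 2 * y 1) • (e 0 + q • e 1)
  + (x 0 * y 3 - x 3 * y 0) • ((-q) • e 4)
  + (x 1 * y 3 - x 3 * y 1) • ((-(q^2)) • e 1)

/-- For `q ≠ 0` the infinitesimal deformation given by `φ₈(0,q,0)` is not
extendable: the bracket `[x,y]_t = [x,y] + t φ(x,y)` fails the Jacobi identity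
for some `t ≠ 0`, a nonzero `t²`-term appearing (the quadratic coefficient
`Σ_cyc φ(x, φ(y,z))` does not vanish identically). -/
theorem phi17_not_extendable (q : ℝ) (hq : q ≠ 0) :
    (∃ (t : ℝ), t ≠ 0 ∧ ∃ x y z : V,
        brt t (phi17 q) x (brt t (phi17 q) y z)
          + brt t (phi17 q) y (brt t (phi17 q) z x)
          + brt t (phi17 q) z (brt t (phi17 q) x y) ≠ 0) ∧
      ∃ x y z : V,
        phi17 q x (phi17 q y z) + phi17 q y (phi17 q z x)
          + phi17 q z (phi17 q x y) ≠ 0 := by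
  constructor
  · refine ⟨1, one_ne_zero, e 1, e 2, e 3, fun h => ?_⟩
    have h0 := congrFun h 0
    simp only [brt, br, phi17, e, Pi.add_apply, Pi.smul_apply, Pi.single_apply,
      smul_eq_mul] at h0
    norm_num [Fin.ext_iff, show ((4:Fin 5):ℕ)=4 from rfl, show ((3:Fin 5):ℕ)=3 from rfl] at h0
    exact hq h0
  · refine ⟨e 1, e 2, e 3, fun h => ?_⟩
    have h0 := congrFun h 0
    simp only [phi17, e, Pi.add_apply, Pi.smul_apply, Pi.single_apply,
      smul_eq_mul] at h0
    norm_num [Fin.ext_iff, show ((4:Fin 5):ℕ)=4 from rfl, show ((3:Fin 5):ℕ)=3 from rfl] at h0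
    exact hq h0

end
end
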